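/- Let r > 0 and let f be a nonzero Laurent series analytic on the annulus A[r,r] with K(f,r) = k(f,r). Then f is invertible in the ring of Laurent series analytic on A[r,r]: there exists a Laurent series g analytic on A[r,r] with fg = 1. -/

import Mathlib

open Filter Topology

variable {F : Type*} [NontriviallyNormedField F]

/-- Value of the power series with coefficients `a` at `z`. -/
noncomputable def psEval (a : ℕ → F) (z : F) : F := ∑' n : ℕ, a n * z ^ n

/-- Value of the Laurent series with coefficients `c` at `z`. -/
noncomputable def lEval (c : ℤ → F) (z : F) : F := ∑' n : ℤ, c n * z ^ n

/-- Gauss norm `|f|_r = sup_n |a_n| r^n` of a power series. -/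
noncomputable def pNorm (a : ℕ → F) (r : ℝ) : ℝ := ⨆ n : ℕ, ‖a n‖ * r ^ n

/-- Gauss norm `|f|_r = sup_n |c_n| r^n` of a Laurent series. -/
noncomputable def lNorm (c : ℤ → F) (r : ℝ) : ℝ := ⨆ n : ℤ, ‖c n‖ * r ^ n

/-- The Laurent series `c` is analytic on the annulus `A[r1,r2]`. -/
def LaurentOn (c : ℤ → F) (r1 r2 : ℝ) : Prop :=
  ∀ r : ℝ, r1 ≤ r → r ≤ r2 → Tendsto (fun n : ℤ => ‖c n‖ * r ^ n) cofinite (nhds 0)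

/-- The Laurent series `c` is analytic on `A[r1,∞)`. -/
def LaurentOnInfty (c : ℤ → F) (r1 : ℝ) : Prop :=
  ∀ r : ℝ, r1 ≤ r → Tendsto (fun n : ℤ => ‖c n‖ * r ^ n) cofinite (nhds 0)

/-- The power series `a` is analytic on the closed ball `B_{≤ r}`. -/
def PSOnClosed (a : ℕ → F) (r : ℝ) : Prop :=
  Tendsto (fun n : ℕ => ‖a n‖ * r ^ n) atTop (nhds 0)

/-- The power series `a` is analytic on the open ball `B_{< R}`. -/
def PSOnOpen (a : ℕ → F) (R : ℝ) : Prop :=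
  ∀ r : ℝ, 0 < r → r < R → Tendsto (fun n : ℕ => ‖a n‖ * r ^ n) atTop (nhds 0)

/-- The power series `a` is entire: it converges on all of `F`. -/
def Entire (a : ℕ → F) : Prop :=
  ∀ r : ℝ, 0 < r → Tendsto (fun n : ℕ => ‖a n‖ * r ^ n) atTop (nhds 0)

/-- `k(f,r)` for a Laurent series. -/
noncomputable def kk (c : ℤ → F) (r : ℝ) : ℤ := sInf {n : ℤ | ‖c n‖ * r ^ n = lNorm c r}

/-- `K(f,r)` for a Laurent series. -/
noncomputable def KK (c : ℤ → F) (r : ℝ) : ℤ := sSup {n : ℤ | ‖c n‖ * r ^ n = lNorm c r}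

/-- Product of two Laurent series. -/
noncomputable def laurentMul (c d : ℤ → F) : ℤ → F := fun n => ∑' i : ℤ, c i * d (n - i)

/-- The Laurent series `1`. -/
noncomputable def laurentOne : ℤ → F := fun n => if n = 0 then 1 else 0

/-- Gauss norm of a polynomial. -/
noncomputable def pgNorm (P : Polynomial F) (r : ℝ) : ℝ := ⨆ n : ℕ, ‖P.coeff n‖ * r ^ n

/-- `k(P,r)` for a polynomial. -/
noncomputable def kP (P : Polynomial F) (r : ℝ) : ℕ :=
  sInf {n : ℕ | ‖P.coeff n‖ * r ^ n = pgNorm P r}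

/-- `K(P,r)` for a polynomial. -/
noncomputable def KP (P : Polynomial F) (r : ℝ) : ℕ :=
  sSup {n : ℕ | ‖P.coeff n‖ * r ^ n = pgNorm P r}

/-- A polynomial regarded as a Laurent series. -/
noncomputable def polyToLaurent (P : Polynomial F) : ℤ → F :=
  fun n => if 0 ≤ n then P.coeff n.toNat else 0

/-- `f` vanishes to order exactly `m` at `z0`, as witnessed by a convergent local
power series expansion of `f` about `z0`. -/
def HasOrderAt (f : F → F) (z0 : F) (m : ℕ) : Prop :=
  ∃ δ > (0 : ℝ), ∃ b : ℕ → F,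
    (∀ z : F, ‖z - z0‖ < δ → f z = ∑' n : ℕ, b n * (z - z0) ^ n) ∧
    (∀ j < m, b j = 0) ∧ b m ≠ 0

/-- Order of vanishing at `0` of a power series. -/
noncomputable def ord0 (c : ℕ → F) : ℕ := sInf {n : ℕ | c n ≠ 0}

/-- Radius of convergence of a power series: the sup of the radii `r` such that
the terms `|c_j| r^j` tend to `0`. -/
noncomputable def convRadius (c : ℕ → F) : ENNReal :=
  ⨆ (r : NNReal) (_ : Tendsto (fun j : ℕ => ‖c j‖ * (r : ℝ) ^ j) atTop (nhds 0)), (r : ENNReal)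

section InvAux

open IsUltrametricDist

set_option linter.unusedSectionVars false
set_option linter.unusedVariables false

variable {F : Type*} [NontriviallyNormedField F] [CompleteSpace F]

/-- If `w → 0` along `cofinite`, then for every `ε > 0` only finitely many values exceed `ε`. -/
lemma finite_ge_of_tendsto {ι : Type*} {w : ι → ℝ} (hw : Tendsto w cofinite (𝓝 0))
    {ε : ℝ} (hε : 0 < ε) : {n : ι | ε ≤ w n}.Finite := by
  have h := hw (Metric.ball_mem_nhds (0 : ℝ) hε)
  rw [mem_map, mem_cofinite] at h
  refine h.subset fun n hn => ?_
  simp only [Set.mem_setOf_eq] at hn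
  simp only [Set.mem_compl_iff, Set.mem_preimage, Metric.mem_ball, dist_zero_right,
    Real.norm_eq_abs, not_lt]
  exact hn.trans (le_abs_self _)

lemma bddAbove_range_of_tendsto {ι : Type*} {w : ι → ℝ} (hw : Tendsto w cofinite (𝓝 0)) :
    BddAbove (Set.range w) := by
  obtain ⟨B, hB⟩ := ((finite_ge_of_tendsto hw one_pos).image w).bddAbove
  refine ⟨max B 1, ?_⟩
  rintro x ⟨n, rfl⟩
  rcases le_or_gt 1 (w n) with h1 | h1
  · exact le_max_of_le_left (hB (Set.mem_image_of_mem w h1))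
  · exact le_max_of_le_right h1.le

lemma exists_eq_ciSup_of_tendsto {ι : Type*} [Nonempty ι] {w : ι → ℝ} (hw0 : ∀ n, 0 ≤ w n)
    (hw : Tendsto w cofinite (𝓝 0)) : ∃ n, w n = ⨆ m, w m := by
  have hbdd := bddAbove_range_of_tendsto hw
  inhabit ι
  have hM0 : 0 ≤ ⨆ m, w m := le_trans (hw0 default) (le_ciSup hbdd default)
  rcases eq_or_lt_of_le hM0 with h0 | h0
  · exact ⟨default, le_antisymm (le_ciSup hbdd default) (h0 ▸ hw0 default)⟩
  · have hfin := finite_ge_of_tendsto hw (half_pos h0)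
    have hne : hfin.toFinset.Nonempty := by
      rw [Set.Finite.toFinset_nonempty]
      by_contra hcon
      rw [Set.not_nonempty_iff_eq_empty] at hcon
      have : (⨆ m, w m) ≤ (⨆ m, w m) / 2 := ciSup_le fun n => by
        by_contra hlt
        exact (Set.eq_empty_iff_forall_notMem.mp hcon n) (le_of_not_ge hlt)
      linarith
    obtain ⟨n, hnmem, hnmax⟩ := hfin.toFinset.exists_max_image w hne
    refine ⟨n, le_antisymm (le_ciSup hbdd n) (ciSup_le fun m => ?_)⟩
    rcases le_or_gt ((⨆ m, w m) / 2) (w m) with h | h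
    · exact hnmax m (by simpa [Set.Finite.mem_toFinset] using h)
    · exact h.le.trans (by simpa [Set.Finite.mem_toFinset] using hnmem)

lemma tendsto_cofinite_of_forall_finite {ι : Type*} {w : ι → ℝ} (hw0 : ∀ n, 0 ≤ w n)
    (h : ∀ ε : ℝ, 0 < ε → {n : ι | ε ≤ w n}.Finite) : Tendsto w cofinite (𝓝 0) := by
  rw [Metric.tendsto_nhds]
  intro ε hε
  filter_upwards [(h ε hε).eventually_cofinite_notMem] with n hn
  rw [Real.dist_eq, sub_zero, abs_of_nonneg (hw0 n)]
  exact lt_of_not_ge fun hc => hn hc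

lemma summable_of_norm_tendsto_cofinite [IsUltrametricDist F] {ι : Type*} {g : ι → F}
    (h : Tendsto (fun i => ‖g i‖) cofinite (𝓝 0)) : Summable g :=
  NonarchimedeanAddGroup.summable_of_tendsto_cofinite_zero
    (tendsto_zero_iff_norm_tendsto_zero.mpr h)

variable {r : ℝ}

lemma wt_le_iff (hr : 0 < r) {x : F} {n : ℤ} {C : ℝ} :
    ‖x‖ * r ^ n ≤ C ↔ ‖x‖ ≤ C * r ^ (-n) := by
  rw [zpow_neg, ← div_eq_mul_inv, le_div_iff₀ (zpow_pos hr n)]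

lemma wt_mul_eq (hr : 0 < r) (x y : F) (i n : ℤ) :
    ‖x * y‖ * r ^ n = (‖x‖ * r ^ i) * (‖y‖ * r ^ (n - i)) := by
  have hrn : r ^ n = r ^ i * r ^ (n - i) := by
    rw [← zpow_add₀ hr.ne']
    congr 1
    ring
  rw [norm_mul, hrn]
  ring

lemma conv_term_tendsto (hr : 0 < r) {a b : ℤ → F} {A : ℝ}
    (ha : ∀ m : ℤ, ‖a m‖ * r ^ m ≤ A)
    (hb : Tendsto (fun m : ℤ => ‖b m‖ * r ^ m) cofinite (𝓝 0)) (n : ℤ) :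
    Tendsto (fun i : ℤ => ‖a i * b (n - i)‖) cofinite (𝓝 0) := by
  have hinj : Function.Injective (fun i : ℤ => n - i) := fun x y hxy => by
    dsimp only at hxy; omega
  have hcomp : Tendsto (fun i : ℤ => ‖b (n - i)‖ * r ^ (n - i)) cofinite (𝓝 0) :=
    hb.comp hinj.tendsto_cofinite
  have h2 := hcomp.const_mul (A * r ^ (-n))
  rw [mul_zero] at h2
  refine squeeze_zero (fun i => norm_nonneg _) (fun i => ?_) h2
  have hai : ‖a i‖ ≤ A * r ^ (-i) := (wt_le_iff hr).mp (ha i)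
  have hstep : ‖a i * b (n - i)‖ ≤ (A * r ^ (-i)) * ‖b (n - i)‖ := by
    rw [norm_mul]
    exact mul_le_mul_of_nonneg_right hai (norm_nonneg _)
  refine hstep.trans (le_of_eq ?_)
  rw [show (-i : ℤ) = -n + (n - i) by ring, zpow_add₀ hr.ne']
  ring

lemma summable_conv [IsUltrametricDist F] (hr : 0 < r) {a b : ℤ → F} {A : ℝ}
    (ha : ∀ m : ℤ, ‖a m‖ * r ^ m ≤ A)
    (hb : Tendsto (fun m : ℤ => ‖b m‖ * r ^ m) cofinite (𝓝 0)) (n : ℤ) :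
    Summable fun i : ℤ => a i * b (n - i) :=
  summable_of_norm_tendsto_cofinite (conv_term_tendsto hr ha hb n)

lemma conv_wt_le [IsUltrametricDist F] (hr : 0 < r) {a b : ℤ → F} {A B : ℝ}
    (hA : 0 ≤ A) (hB : 0 ≤ B)
    (ha : ∀ m : ℤ, ‖a m‖ * r ^ m ≤ A) (hb : ∀ m : ℤ, ‖b m‖ * r ^ m ≤ B) (n : ℤ) :
    ‖laurentMul a b n‖ * r ^ n ≤ A * B := by
  rw [laurentMul, wt_le_iff hr]
  refine norm_tsum_le_of_forall_le_of_nonneg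
    (mul_nonneg (mul_nonneg hA hB) (zpow_pos hr _).le) fun i => ?_
  rw [← wt_le_iff hr, wt_mul_eq hr _ _ i n]
  exact mul_le_mul (ha i) (hb (n - i)) (mul_nonneg (norm_nonneg _) (zpow_pos hr _).le) hA

lemma conv_an [IsUltrametricDist F] (hr : 0 < r) {a b : ℤ → F} {A B : ℝ}
    (hA : 0 ≤ A) (hB : 0 ≤ B)
    (haB : ∀ m : ℤ, ‖a m‖ * r ^ m ≤ A) (hbB : ∀ m : ℤ, ‖b m‖ * r ^ m ≤ B)
    (ha : Tendsto (fun m : ℤ => ‖a m‖ * r ^ m) cofinite (𝓝 0))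
    (hb : Tendsto (fun m : ℤ => ‖b m‖ * r ^ m) cofinite (𝓝 0)) :
    Tendsto (fun n : ℤ => ‖laurentMul a b n‖ * r ^ n) cofinite (𝓝 0) := by
  apply tendsto_cofinite_of_forall_finite
    (fun n => mul_nonneg (norm_nonneg _) (zpow_pos hr n).le)
  intro ε hε
  have hABpos : (0:ℝ) < A + B + 1 := by linarith
  set δ : ℝ := ε / (2 * (A + B + 1)) with hδ
  have hδpos : 0 < δ := by positivity
  have hhalf : δ * (A + B + 1) = ε / 2 := by
    rw [hδ]; field_simp
  have hI := finite_ge_of_tendsto ha hδpos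
  have hJ := finite_ge_of_tendsto hb hδpos
  refine (hI.image2 (· + ·) hJ).subset fun n hn => ?_
  by_contra hmem
  have hbound : ‖laurentMul a b n‖ * r ^ n ≤ ε / 2 := by
    rw [laurentMul, wt_le_iff hr]
    refine norm_tsum_le_of_forall_le_of_nonneg
      (mul_nonneg (by linarith) (zpow_pos hr _).le) fun i => ?_
    rw [← wt_le_iff hr, wt_mul_eq hr _ _ i n]
    have hbnn : 0 ≤ ‖b (n - i)‖ * r ^ (n - i) :=
      mul_nonneg (norm_nonneg _) (zpow_pos hr _).le
    have hann : 0 ≤ ‖a i‖ * r ^ i := mul_nonneg (norm_nonneg _) (zpow_pos hr _).le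
    rcases le_or_gt δ (‖a i‖ * r ^ i) with hi | hi
    · have hni : ‖b (n - i)‖ * r ^ (n - i) < δ := by
        by_contra hc
        push_neg at hc
        refine hmem ?_
        have : n = i + (n - i) := by ring
        rw [this]
        exact Set.mem_image2_of_mem hi hc
      rw [← hhalf]
      calc (‖a i‖ * r ^ i) * (‖b (n - i)‖ * r ^ (n - i)) ≤ A * δ :=
            mul_le_mul (haB i) hni.le hbnn hA
        _ ≤ δ * (A + B + 1) := by nlinarith
    · rw [← hhalf]
      calc (‖a i‖ * r ^ i) * (‖b (n - i)‖ * r ^ (n - i)) ≤ δ * B :=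
            mul_le_mul hi.le (hbB _) hbnn hδpos.le
        _ ≤ δ * (A + B + 1) := by nlinarith
  simp only [Set.mem_setOf_eq] at hn
  linarith

lemma an_shift (hr : 0 < r) {c : ℤ → F} (N : ℤ) (d : F)
    (hc : Tendsto (fun m : ℤ => ‖c m‖ * r ^ m) cofinite (𝓝 0)) :
    Tendsto (fun n : ℤ => ‖d * c (n + N)‖ * r ^ n) cofinite (𝓝 0) := by
  have hinj : Function.Injective (fun n : ℤ => n + N) := fun x y hxy => by
    dsimp only at hxy; omega
  have h1 : Tendsto (fun n : ℤ => ‖c (n + N)‖ * r ^ (n + N)) cofinite (𝓝 0) :=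
    hc.comp hinj.tendsto_cofinite
  have h2 := h1.const_mul (‖d‖ * r ^ (-N))
  rw [mul_zero] at h2
  refine h2.congr fun n => ?_
  have hrN : (r : ℝ) ^ N ≠ 0 := (zpow_pos hr N).ne'
  rw [norm_mul, zpow_neg, zpow_add₀ hr.ne']
  field_simp

/-- Convolution powers of a Laurent series. -/
noncomputable def convPow (h : ℤ → F) : ℕ → ℤ → F
  | 0 => laurentOne
  | (k + 1) => laurentMul h (convPow h k)

lemma wt_one_le (hr : 0 < r) (n : ℤ) : ‖(laurentOne : ℤ → F) n‖ * r ^ n ≤ 1 := by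
  by_cases hn : n = 0
  · simp [laurentOne, hn]
  · simp [laurentOne, hn]

lemma an_one (hr : 0 < r) :
    Tendsto (fun n : ℤ => ‖(laurentOne : ℤ → F) n‖ * r ^ n) cofinite (𝓝 0) := by
  apply tendsto_cofinite_of_forall_finite
    (fun n => mul_nonneg (norm_nonneg _) (zpow_pos hr n).le)
  intro ε hε
  refine (Set.finite_singleton (0 : ℤ)).subset fun n hn => ?_
  simp only [Set.mem_setOf_eq] at hn
  by_contra h0
  simp only [Set.mem_singleton_iff] at h0
  rw [show (laurentOne : ℤ → F) n = 0 from if_neg h0] at hn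
  simp at hn
  linarith

end InvAux

/-- If `f` is a nonzero Laurent series analytic on `A[r,r]` with `K(f,r) = k(f,r)`,
then `f` is invertible in the ring of Laurent series analytic on `A[r,r]`. -/
theorem stmt9 {F : Type*} [NontriviallyNormedField F] [CompleteSpace F] [IsAlgClosed F]
    (hna : IsNonarchimedean (fun x : F => ‖x‖))
    (r : ℝ) (hr : 0 < r)
    (f : ℤ → F) (hf0 : f ≠ 0) (hf : LaurentOn f r r) (hKk : KK f r = kk f r) :
    ∃ g : ℤ → F, LaurentOn g r r ∧ laurentMul f g = laurentOne := by
  haveI : IsUltrametricDist F :=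
    IsUltrametricDist.isUltrametricDist_of_isNonarchimedean_norm hna
  clear hna
  have hAf : Tendsto (fun n : ℤ => ‖f n‖ * r ^ n) cofinite (𝓝 0) := hf r le_rfl le_rfl
  have hwle : ∀ n : ℤ, ‖f n‖ * r ^ n ≤ lNorm f r :=
    fun n => le_ciSup (bddAbove_range_of_tendsto hAf) n
  have hMpos : 0 < lNorm f r := by
    obtain ⟨n0, hn0⟩ := Function.ne_iff.mp hf0
    exact lt_of_lt_of_le (mul_pos (norm_pos_iff.mpr hn0) (zpow_pos hr n0)) (hwle n0)
  have hSne : {n : ℤ | ‖f n‖ * r ^ n = lNorm f r}.Nonempty := by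
    obtain ⟨n, hn⟩ := exists_eq_ciSup_of_tendsto
      (fun n : ℤ => mul_nonneg (norm_nonneg _) (zpow_pos hr n).le) hAf
    exact ⟨n, hn⟩
  have hSfin : {n : ℤ | ‖f n‖ * r ^ n = lNorm f r}.Finite :=
    (finite_ge_of_tendsto hAf hMpos).subset fun n hn => hn.ge
  set N : ℤ := kk f r with hN
  have hNS : N ∈ {n : ℤ | ‖f n‖ * r ^ n = lNorm f r} := by
    rw [hN, kk]
    exact Int.csInf_mem hSne hSfin.bddBelow
  have hSsub : ∀ m ∈ {n : ℤ | ‖f n‖ * r ^ n = lNorm f r}, m = N := by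
    intro m hm
    have h1 : N ≤ m := by
      rw [hN, kk]; exact csInf_le hSfin.bddBelow hm
    have h2 : m ≤ KK f r := by
      rw [KK]; exact le_csSup hSfin.bddAbove hm
    rw [hKk] at h2
    omega
  have hdM : ‖f N‖ * r ^ N = lNorm f r := hNS
  have hd0 : f N ≠ 0 := by
    intro h0
    rw [h0] at hdM
    simp only [norm_zero, zero_mul] at hdM
    linarith
  -- the normalized series e, with e 0 = 1 and strict max at 0
  set e : ℤ → F := fun n => (f N)⁻¹ * f (n + N) with he_def
  have key : ∀ n : ℤ, ‖e n‖ * r ^ n = (‖f (n + N)‖ * r ^ (n + N)) / lNorm f r := by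
    intro n
    rw [he_def, ← hdM, norm_mul, norm_inv, zpow_add₀ hr.ne']
    have h1 : ‖f N‖ ≠ 0 := norm_ne_zero_iff.mpr hd0
    have h2 : (r : ℝ) ^ N ≠ 0 := (zpow_pos hr N).ne'
    field_simp
  have he_le : ∀ n : ℤ, ‖e n‖ * r ^ n ≤ 1 := fun n => by
    rw [key n]
    exact (div_le_one hMpos).mpr (hwle _)
  have he_lt : ∀ n : ℤ, n ≠ 0 → ‖e n‖ * r ^ n < 1 := by
    intro n hn
    rw [key n]
    refine (div_lt_one hMpos).mpr ?_
    rcases (hwle (n + N)).lt_or_eq with h | h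
    · exact h
    · exfalso
      have := hSsub (n + N) h
      omega
  have hAe : Tendsto (fun n : ℤ => ‖e n‖ * r ^ n) cofinite (𝓝 0) := by
    rw [he_def]
    exact an_shift hr N (f N)⁻¹ hAf
  -- the series h with e = 1 - h
  set hh : ℤ → F := fun n => if n = 0 then 0 else -e n with hh_def
  have wh_eq : ∀ n : ℤ, ‖hh n‖ * r ^ n = if n = 0 then 0 else ‖e n‖ * r ^ n := by
    intro n
    by_cases hn : n = 0 <;> simp [hh_def, hn]
  have wh_nonneg : ∀ n : ℤ, 0 ≤ ‖hh n‖ * r ^ n :=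
    fun n => mul_nonneg (norm_nonneg _) (zpow_pos hr n).le
  have hAh : Tendsto (fun n : ℤ => ‖hh n‖ * r ^ n) cofinite (𝓝 0) := by
    refine squeeze_zero wh_nonneg (fun n => ?_) hAe
    rw [wh_eq]
    by_cases hn : n = 0
    · simp only [hn, if_pos]
      exact mul_nonneg (norm_nonneg _) (zpow_pos hr 0).le
    · rw [if_neg hn]
  set t : ℝ := ⨆ n : ℤ, ‖hh n‖ * r ^ n with ht_def
  have hbt : ∀ n : ℤ, ‖hh n‖ * r ^ n ≤ t := fun n => le_ciSup (bddAbove_range_of_tendsto hAh) n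
  have ht0 : 0 ≤ t := le_trans (wh_nonneg 0) (hbt 0)
  have ht1 : t < 1 := by
    obtain ⟨n, hn⟩ := exists_eq_ciSup_of_tendsto wh_nonneg hAh
    rw [ht_def, ← hn, wh_eq]
    by_cases h0 : n = 0
    · rw [if_pos h0]; norm_num
    · rw [if_neg h0]; exact he_lt n h0
  -- convolution powers of hh
  have hbp : ∀ k : ℕ, ∀ n : ℤ, ‖convPow hh k n‖ * r ^ n ≤ t ^ k := by
    intro k
    induction k with
    | zero => intro n; simpa [convPow] using wt_one_le hr n
    | succ k ih =>
      intro n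
      rw [pow_succ']
      exact conv_wt_le hr ht0 (pow_nonneg ht0 k) hbt ih n
  have hAp : ∀ k : ℕ, Tendsto (fun n : ℤ => ‖convPow hh k n‖ * r ^ n) cofinite (𝓝 0) := by
    intro k
    induction k with
    | zero => exact an_one hr
    | succ k ih => exact conv_an hr ht0 (pow_nonneg ht0 k) hbt (hbp k) hAh ih
  -- geometric series
  set g' : ℤ → F := fun n => ∑' k : ℕ, convPow hh k n with hg'_def
  have hsum' : ∀ n : ℤ, Summable fun k : ℕ => convPow hh k n := by
    intro n
    apply summable_of_norm_tendsto_cofinite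
    rw [Nat.cofinite_eq_atTop]
    have hlim : Tendsto (fun k : ℕ => t ^ k * r ^ (-n)) atTop (𝓝 0) := by
      have := (tendsto_pow_atTop_nhds_zero_of_lt_one ht0 ht1).mul_const ((r : ℝ) ^ (-n))
      simpa using this
    refine squeeze_zero (fun k => norm_nonneg _) (fun k => ?_) hlim
    exact (wt_le_iff hr).mp (hbp k n)
  have hbg' : ∀ n : ℤ, ‖g' n‖ * r ^ n ≤ 1 := by
    intro n
    rw [hg'_def, wt_le_iff hr]
    refine IsUltrametricDist.norm_tsum_le_of_forall_le_of_nonneg (by positivity) fun k => ?_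
    rw [← wt_le_iff hr]
    exact (hbp k n).trans (pow_le_one₀ ht0 ht1.le)
  have hAg' : Tendsto (fun n : ℤ => ‖g' n‖ * r ^ n) cofinite (𝓝 0) := by
    apply tendsto_cofinite_of_forall_finite
      (fun n => mul_nonneg (norm_nonneg _) (zpow_pos hr n).le)
    intro ε hε
    obtain ⟨K, hK⟩ := exists_pow_lt_of_lt_one hε ht1
    have hhead : Tendsto (fun n : ℤ => ∑ k ∈ Finset.range K, (‖convPow hh k n‖ * r ^ n))
        cofinite (𝓝 0) := by
      have := tendsto_finset_sum (Finset.range K) (fun k _ => hAp k)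
      simpa using this
    have hev : ∀ᶠ n in (cofinite : Filter ℤ),
        (∑ k ∈ Finset.range K, ‖convPow hh k n‖ * r ^ n) < ε :=
      hhead.eventually_lt_const hε
    refine (eventually_cofinite.mp hev).subset fun n hn => ?_
    simp only [Set.mem_setOf_eq] at hn ⊢
    intro hlt
    have hsplit : g' n = (∑ k ∈ Finset.range K, convPow hh k n) +
        ∑' k : ℕ, convPow hh (k + K) n := (Summable.sum_add_tsum_nat_add K (hsum' n)).symm
    have htail : ‖∑' k : ℕ, convPow hh (k + K) n‖ ≤ t ^ K * r ^ (-n) := by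
      refine IsUltrametricDist.norm_tsum_le_of_forall_le_of_nonneg
        (mul_nonneg (pow_nonneg ht0 K) (zpow_pos hr _).le) fun k => ?_
      rw [← wt_le_iff hr]
      exact (hbp (k + K) n).trans (pow_le_pow_of_le_one ht0 ht1.le (Nat.le_add_left K k))
    have hhd : ‖∑ k ∈ Finset.range K, convPow hh k n‖ * r ^ n ≤
        ∑ k ∈ Finset.range K, ‖convPow hh k n‖ * r ^ n := by
      rw [← Finset.sum_mul]
      exact mul_le_mul_of_nonneg_right (norm_sum_le _ _) (zpow_pos hr n).le
    have hwbound : ‖g' n‖ * r ^ n < ε := by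
      rw [hsplit]
      calc ‖(∑ k ∈ Finset.range K, convPow hh k n) + ∑' k : ℕ, convPow hh (k + K) n‖ * r ^ n
          ≤ max ‖∑ k ∈ Finset.range K, convPow hh k n‖ ‖∑' k : ℕ, convPow hh (k + K) n‖ * r ^ n :=
            mul_le_mul_of_nonneg_right (IsUltrametricDist.norm_add_le_max _ _) (zpow_pos hr n).le
        _ = max (‖∑ k ∈ Finset.range K, convPow hh k n‖ * r ^ n)
            (‖∑' k : ℕ, convPow hh (k + K) n‖ * r ^ n) :=
            max_mul_of_nonneg _ _ (zpow_pos hr n).le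
        _ < ε := by
            rw [max_lt_iff]
            constructor
            · exact lt_of_le_of_lt hhd hlt
            · calc ‖∑' k : ℕ, convPow hh (k + K) n‖ * r ^ n ≤ t ^ K := by
                    rw [wt_le_iff hr]; exact htail
                _ < ε := hK
    linarith
  -- the inversion identity
  have hmulhg : ∀ n : ℤ, laurentMul hh g' n = g' n - laurentOne n := by
    intro n
    have huncsum : Summable (Function.uncurry fun (i : ℤ) (k : ℕ) => hh i * convPow hh k (n - i)) := by
      apply summable_of_norm_tendsto_cofinite
      apply tendsto_cofinite_of_forall_finite (fun _ => norm_nonneg _)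
      intro ε hε
      have hc : 0 < ε * r ^ n := mul_pos hε (zpow_pos hr n)
      have hIfin : {i : ℤ | ε * r ^ n ≤ ‖hh i‖ * r ^ i}.Finite := finite_ge_of_tendsto hAh hc
      have hKfin : {k : ℕ | ε * r ^ n ≤ t ^ k}.Finite := by
        refine finite_ge_of_tendsto ?_ hc
        rw [Nat.cofinite_eq_atTop]
        exact tendsto_pow_atTop_nhds_zero_of_lt_one ht0 ht1
      refine (hIfin.prod hKfin).subset fun p hp' => ?_
      obtain ⟨i, k⟩ := p
      simp only [Set.mem_setOf_eq, Function.uncurry] at hp'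
      have hkey : ε * r ^ n ≤ (‖hh i‖ * r ^ i) * t ^ k := by
        have h1 : ‖hh i * convPow hh k (n - i)‖ * r ^ n ≤ (‖hh i‖ * r ^ i) * t ^ k := by
          rw [wt_mul_eq hr _ _ i n]
          exact mul_le_mul_of_nonneg_left (hbp k (n - i)) (wh_nonneg i)
        exact le_trans (mul_le_mul_of_nonneg_right hp' (zpow_pos hr n).le) h1
      have htk1 : t ^ k ≤ 1 := pow_le_one₀ ht0 ht1.le
      have hwh1 : ‖hh i‖ * r ^ i ≤ 1 := (hbt i).trans ht1.le
      have htknn : 0 ≤ t ^ k := pow_nonneg ht0 k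
      constructor
      · simp only [Set.mem_setOf_eq]
        nlinarith [wh_nonneg i]
      · simp only [Set.mem_setOf_eq]
        nlinarith [wh_nonneg i]
    calc laurentMul hh g' n
        = ∑' i : ℤ, ∑' k : ℕ, hh i * convPow hh k (n - i) := by
          rw [laurentMul]
          exact tsum_congr fun i => (tsum_mul_left).symm
      _ = ∑' k : ℕ, ∑' i : ℤ, hh i * convPow hh k (n - i) := (Summable.tsum_comm huncsum).symm
      _ = ∑' k : ℕ, convPow hh (k + 1) n := by
          refine tsum_congr fun k => ?_
          rfl
      _ = g' n - laurentOne n := by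
          have h0 := Summable.tsum_eq_zero_add (hsum' n)
          have : laurentOne n = convPow hh 0 n := rfl
          rw [hg'_def, this, eq_sub_iff_add_eq, add_comm, ← h0]
  have hconv : ∀ n : ℤ, laurentMul e g' n = laurentOne n := by
    intro n
    have he_eq : ∀ m : ℤ, e m = laurentOne m - hh m := by
      intro m
      by_cases hm : m = 0
      · subst hm
        simp only [hh_def, if_pos rfl, laurentOne, if_pos rfl, sub_zero, he_def, zero_add]
        exact inv_mul_cancel₀ hd0
      · simp [hh_def, laurentOne, hm]
    have hs1 : Summable fun i : ℤ => laurentOne (F := F) i * g' (n - i) := by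
      apply summable_of_ne_finset_zero (s := {(0 : ℤ)})
      intro i hi
      simp only [Finset.mem_singleton] at hi
      rw [show (laurentOne : ℤ → F) i = 0 from if_neg hi, zero_mul]
    have hs2 : Summable fun i : ℤ => hh i * g' (n - i) := summable_conv hr hbt hAg' n
    calc laurentMul e g' n
        = ∑' i : ℤ, (laurentOne i * g' (n - i) - hh i * g' (n - i)) := by
          rw [laurentMul]
          exact tsum_congr fun i => by rw [he_eq i, sub_mul]
      _ = (∑' i : ℤ, laurentOne i * g' (n - i)) - ∑' i : ℤ, hh i * g' (n - i) :=
          Summable.tsum_sub hs1 hs2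
      _ = g' n - (g' n - laurentOne n) := by
          rw [← hmulhg n]
          have h1 : (∑' i : ℤ, laurentOne (F := F) i * g' (n - i)) = g' n := by
            rw [tsum_eq_single 0 (fun i hi => by
              rw [show (laurentOne : ℤ → F) i = 0 from if_neg hi, zero_mul])]
            simp [laurentOne]
          rw [h1]
          rfl
      _ = laurentOne n := by ring
  -- transfer back to f
  refine ⟨fun n => (f N)⁻¹ * g' (n + N), ?_, ?_⟩
  · intro s hs1 hs2
    obtain rfl : s = r := le_antisymm hs2 hs1
    exact an_shift hr N (f N)⁻¹ hAg'
  · funext n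
    have hterm : ∀ i : ℤ, f i * ((f N)⁻¹ * g' (n - i + N)) =
        (fun j : ℤ => e j * g' (n - j)) (i - N) := by
      intro i
      show f i * ((f N)⁻¹ * g' (n - i + N)) = e (i - N) * g' (n - (i - N))
      rw [he_def]
      simp only []
      rw [sub_add_cancel, show n - (i - N) = n - i + N by ring]
      ring
    calc laurentMul f (fun n => (f N)⁻¹ * g' (n + N)) n
        = ∑' i : ℤ, (fun j : ℤ => e j * g' (n - j)) (i - N) := by
          rw [laurentMul]
          exact tsum_congr hterm
      _ = ∑' j : ℤ, e j * g' (n - j) := (Equiv.subRight N).tsum_eq fun j => e j * g' (n - j)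
      _ = laurentOne n := hconv n
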